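/- Let T = [T₁,…,Tₙ] be a row contraction, Q := SOT-lim Φ_T^m(I), Y : H → K := closure(Q^{1/2}H) given by Yh := Q^{1/2}h. Then there exist bounded operators Z₁,…,Zₙ on K with Σᵢ ZᵢZᵢ* = I_K and Y* Zᵢ = Tᵢ Y* for all i. -/

import Mathlib

open ContinuousLinearMap Filter

local notation "⟪" x ", " y "⟫_ℂ" => @inner ℂ _ _ x y

set_option maxHeartbeats 1000000 in
theorem cuntz_coextension_exists
    {H : Type*} [NormedAddCommGroup H] [InnerProductSpace ℂ H] [CompleteSpace H]
    {n : ℕ} (T : Fin n → H →L[ℂ] H)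
    (hrow : (1 - ∑ i, T i * adjoint (T i)).IsPositive)
    (Q : H →L[ℂ] H)
    (hQ : ∀ h : H, Tendsto
      (fun m => ((fun X => ∑ i, T i * X * adjoint (T i))^[m] 1) h) atTop (nhds (Q h)))
    (R : H →L[ℂ] H) (hRpos : R.IsPositive) (hRR : R * R = Q) :
    -- `K` is the closure of the range of `Q^{1/2} = R`, and `Y h := Q^{1/2} h`
    letI K : Submodule ℂ H := (LinearMap.range R.toLinearMap).topologicalClosure
    letI : CompleteSpace K :=
      (LinearMap.range R.toLinearMap).isClosed_topologicalClosure.completeSpace_coe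
    ∀ Y : H →L[ℂ] K, (∀ h : H, (Y h : H) = R h) →
      ∃ Z : Fin n → (K →L[ℂ] K),
        (∑ i, Z i * adjoint (Z i) = 1) ∧
        (∀ i, adjoint Y ∘L Z i = T i ∘L adjoint Y) := by
  set D : Submodule ℂ H := LinearMap.range R.toLinearMap with hD
  set K : Submodule ℂ H := D.topologicalClosure with hKdef
  haveI : CompleteSpace K :=
    (LinearMap.range R.toLinearMap).isClosed_topologicalClosure.completeSpace_coe
  intro Y hY
  -- Step 1: `Q` is a fixed point of `Φ`.
  have hQfix : ∀ h : H, ∑ i, T i (Q (adjoint (T i) h)) = Q h := by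
    intro h
    set Φ : (H →L[ℂ] H) → (H →L[ℂ] H) := fun X => ∑ i, T i * X * adjoint (T i) with hΦ
    have h2 : Tendsto (fun m => (Φ^[m + 1] 1) h) atTop (nhds (Q h)) :=
      (hQ h).comp (tendsto_add_atTop_nat 1)
    have h3 : Tendsto (fun m => ∑ i, T i ((Φ^[m] 1) (adjoint (T i) h))) atTop
        (nhds (∑ i, T i (Q (adjoint (T i) h)))) :=
      tendsto_finset_sum _ fun i _ =>
        ((T i).continuous.tendsto _).comp (hQ (adjoint (T i) h))
    have heq : (fun m => (Φ^[m + 1] 1) h)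
        = fun m => ∑ i, T i ((Φ^[m] 1) (adjoint (T i) h)) := by
      funext m
      rw [Function.iterate_succ_apply']
      simp [Φ, ContinuousLinearMap.sum_apply, ContinuousLinearMap.mul_apply]
    rw [heq] at h2
    exact tendsto_nhds_unique h3 h2
  -- Step 2: the key norm identity.
  have hRsa : adjoint R = R := ContinuousLinearMap.isSelfAdjoint_iff'.mp hRpos.isSelfAdjoint
  have hkey : ∀ x : H, (‖R x‖ : ℝ) ^ 2 = RCLike.re (⟪Q x, x⟫_ℂ) := by
    intro x
    have h0 : ⟪Q x, x⟫_ℂ = ⟪R x, R x⟫_ℂ := by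
      rw [show Q x = R (R x) from by rw [← hRR]; rfl]
      nth_rewrite 1 [← hRsa]
      exact ContinuousLinearMap.adjoint_inner_left R x (R x)
    rw [h0, inner_self_eq_norm_sq]
  have hnorm : ∀ h : H, ∑ i, ‖R (adjoint (T i) h)‖ ^ 2 = ‖R h‖ ^ 2 := by
    intro h
    have h1 : ∀ i : Fin n,
        (‖R (adjoint (T i) h)‖ : ℝ) ^ 2 = RCLike.re (⟪T i (Q (adjoint (T i) h)), h⟫_ℂ) := by
      intro i
      rw [hkey]
      congr 1
      rw [← ContinuousLinearMap.adjoint_inner_right (T i) (Q (adjoint (T i) h)) h]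
    calc ∑ i, ‖R (adjoint (T i) h)‖ ^ 2
        = ∑ i, RCLike.re (⟪T i (Q (adjoint (T i) h)), h⟫_ℂ) := by
          exact Finset.sum_congr rfl fun i _ => h1 i
      _ = RCLike.re (⟪∑ i, T i (Q (adjoint (T i) h)), h⟫_ℂ) := by
          rw [sum_inner, map_sum]
      _ = RCLike.re (⟪Q h, h⟫_ℂ) := by rw [hQfix h]
      _ = ‖R h‖ ^ 2 := (hkey h).symm
  have hle : ∀ (i : Fin n) (h : H), ‖R (adjoint (T i) h)‖ ≤ ‖R h‖ := by
    intro i h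
    have h2 : ‖R (adjoint (T i) h)‖ ^ 2 ≤ ‖R h‖ ^ 2 := by
      rw [← hnorm h]
      exact Finset.single_le_sum (f := fun j => ‖R (adjoint (T j) h)‖ ^ 2)
        (fun j _ => sq_nonneg _) (Finset.mem_univ i)
    nlinarith [norm_nonneg (R (adjoint (T i) h)), norm_nonneg (R h)]
  -- Step 3: the dense embedding of `range R` in `K`.
  have hDK : D ≤ K := Submodule.le_topologicalClosure _
  have memD : ∀ x : H, R x ∈ D := fun x => LinearMap.mem_range_self _ x
  let eLI : D →ₗᵢ[ℂ] K := ⟨Submodule.inclusion hDK, fun _ => rfl⟩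
  let e : D →L[ℂ] K := eLI.toContinuousLinearMap
  have he_val : ∀ x : D, (e x : H) = (x : H) := fun _ => rfl
  have he_ui : IsUniformInducing e := eLI.isometry.isUniformInducing
  have he_dense : DenseRange e := by
    intro k
    have hk : (k : H) ∈ closure (D : Set H) := by
      rw [← Submodule.topologicalClosure_coe]
      exact k.2
    rw [closure_subtype]
    have himg : (Subtype.val '' Set.range e) = (D : Set H) := by
      ext y
      constructor
      · rintro ⟨-, ⟨x, rfl⟩, rfl⟩
        exact x.2
      · intro hy
        exact ⟨e ⟨y, hy⟩, ⟨⟨y, hy⟩, rfl⟩, rfl⟩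
    rw [himg]
    exact hk
  -- Step 4: the maps `Λ i` on `K`.
  have memK : ∀ x : H, R x ∈ K := fun x => hDK (memD x)
  let gC : Fin n → (H →L[ℂ] K) := fun i =>
    (R ∘L adjoint (T i)).codRestrict K (fun h => memK (adjoint (T i) h))
  have hgC_val : ∀ (i : Fin n) (h : H), ((gC i h : K) : H) = R (adjoint (T i) h) :=
    fun i h => rfl
  have hker : ∀ i : Fin n, LinearMap.ker R.toLinearMap ≤ LinearMap.ker (gC i).toLinearMap := by
    intro i h hh
    have hh' : R h = 0 := hh
    have : ‖R (adjoint (T i) h)‖ ≤ ‖R h‖ := hle i h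
    rw [hh', norm_zero] at this
    have h0 : R (adjoint (T i) h) = 0 :=
      norm_le_zero_iff.mp this
    apply Subtype.ext
    exact h0
  let fLin : Fin n → (D →ₗ[ℂ] K) := fun i =>
    ((LinearMap.ker R.toLinearMap).liftQ (gC i).toLinearMap (hker i)).comp
      (LinearMap.quotKerEquivRange R.toLinearMap).symm.toLinearMap
  have hf_apply : ∀ (i : Fin n) (h : H), fLin i ⟨R h, memD h⟩ = gC i h := by
    intro i h
    have hsymm : (LinearMap.quotKerEquivRange R.toLinearMap).symm ⟨R h, memD h⟩
        = (LinearMap.ker R.toLinearMap).mkQ h :=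
      LinearMap.quotKerEquivRange_symm_apply_image R.toLinearMap h (memD h)
    simp only [fLin, LinearMap.comp_apply, LinearEquiv.coe_coe, hsymm,
      Submodule.mkQ_apply, Submodule.liftQ_apply]
    rfl
  have hf_bound : ∀ (i : Fin n) (x : D), ‖fLin i x‖ ≤ 1 * ‖x‖ := by
    intro i x
    obtain ⟨h, hh⟩ := x.2
    have hx : x = ⟨R h, memD h⟩ := Subtype.ext hh.symm
    rw [hx, hf_apply i h, one_mul]
    show ‖R (adjoint (T i) h)‖ ≤ ‖R h‖
    exact hle i h
  let fC : Fin n → (D →L[ℂ] K) := fun i => (fLin i).mkContinuous 1 (hf_bound i)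
  let Λ : Fin n → (K →L[ℂ] K) := fun i => (fC i).extend e
  have hΛ_e : ∀ (i : Fin n) (x : D), Λ i (e x) = fLin i x := fun i x =>
    ContinuousLinearMap.extend_eq (f := fC i) (e := e) he_dense he_ui x
  -- Step 5: `Λ i` intertwines `Y` and `adjoint (T i)`.
  have hYval : ∀ h : H, Y h = e ⟨R h, memD h⟩ := by
    intro h
    apply Subtype.ext
    rw [hY h, he_val]
  have hΛY : ∀ (i : Fin n) (h : H), Λ i (Y h) = Y (adjoint (T i) h) := by
    intro i h
    rw [hYval h, hΛ_e i _, hf_apply i h]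
    apply Subtype.ext
    rw [hgC_val i h, hY]
  -- Step 6: the norm identity on `K`.
  have hsumK : ∀ k : K, ∑ i, ‖Λ i k‖ ^ 2 = ‖k‖ ^ 2 := by
    have hcont1 : Continuous fun k : K => ∑ i, ‖Λ i k‖ ^ 2 := by
      apply continuous_finset_sum
      intro i _
      exact ((Λ i).continuous.norm).pow 2
    have hcont2 : Continuous fun k : K => ‖k‖ ^ 2 := continuous_norm.pow 2
    have heqon : Set.EqOn (fun k : K => ∑ i, ‖Λ i k‖ ^ 2) (fun k : K => ‖k‖ ^ 2)
        (Set.range e) := by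
      rintro - ⟨x, rfl⟩
      obtain ⟨h, hh⟩ := x.2
      have hx : x = ⟨R h, memD h⟩ := Subtype.ext hh.symm
      subst hx
      simp only
      have h1 : ∀ i : Fin n, ‖Λ i (e ⟨R h, memD h⟩)‖ = ‖R (adjoint (T i) h)‖ := by
        intro i
        rw [hΛ_e i _, hf_apply i h]
        rfl
      have h2 : ‖e (⟨R h, memD h⟩ : D)‖ = ‖R h‖ := rfl
      rw [h2]
      calc ∑ i, ‖Λ i (e ⟨R h, memD h⟩)‖ ^ 2
          = ∑ i, ‖R (adjoint (T i) h)‖ ^ 2 :=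
            Finset.sum_congr rfl fun i _ => by rw [h1 i]
        _ = ‖R h‖ ^ 2 := hnorm h
    have := Continuous.ext_on he_dense hcont1 hcont2 heqon
    intro k
    exact congrFun this k
  -- Step 7: conclude.
  refine ⟨fun i => adjoint (Λ i), ?_, ?_⟩
  · have hadj : ∀ i : Fin n, adjoint (adjoint (Λ i)) = Λ i := fun i =>
      ContinuousLinearMap.adjoint_adjoint (Λ i)
    have hsum : (∑ i, adjoint (Λ i) * Λ i : K →L[ℂ] K) = 1 := by
      have hlin : ((∑ i, adjoint (Λ i) * Λ i : K →L[ℂ] K) : K →ₗ[ℂ] K)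
          = ((1 : K →L[ℂ] K) : K →ₗ[ℂ] K) := by
        rw [← ext_inner_map]
        intro x
        simp only [ContinuousLinearMap.coe_coe, ContinuousLinearMap.sum_apply,
          ContinuousLinearMap.mul_apply, ContinuousLinearMap.one_apply, sum_inner]
        have h3 : ⟪x, x⟫_ℂ = ((‖x‖ : ℂ) ^ 2) := inner_self_eq_norm_sq_to_K x
        rw [h3]
        calc ∑ i, ⟪adjoint (Λ i) (Λ i x), x⟫_ℂ
            = ∑ i, ((‖Λ i x‖ : ℂ) ^ 2) := by
              refine Finset.sum_congr rfl fun i _ => ?_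
              rw [ContinuousLinearMap.adjoint_inner_left (Λ i) x (Λ i x)]
              exact inner_self_eq_norm_sq_to_K (Λ i x)
          _ = ((‖x‖ : ℂ) ^ 2) := by
              have hx := hsumK x
              exact_mod_cast hx
      exact ContinuousLinearMap.coe_injective hlin
    calc (∑ i, adjoint (Λ i) * adjoint (adjoint (Λ i)) : K →L[ℂ] K)
        = ∑ i, adjoint (Λ i) * Λ i := by
          refine Finset.sum_congr rfl fun i _ => by rw [hadj i]
      _ = 1 := hsum
  · intro i
    have hcomp : Λ i ∘L Y = Y ∘L adjoint (T i) := ContinuousLinearMap.ext fun h => hΛY i h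
    calc adjoint Y ∘L adjoint (Λ i)
        = adjoint (Λ i ∘L Y) := (ContinuousLinearMap.adjoint_comp (Λ i) Y).symm
      _ = adjoint (Y ∘L adjoint (T i)) := by rw [hcomp]
      _ = adjoint (adjoint (T i)) ∘L adjoint Y := ContinuousLinearMap.adjoint_comp _ _
      _ = T i ∘L adjoint Y := by rw [ContinuousLinearMap.adjoint_adjoint]
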